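/- (Corollary 5) Let L be a finite-dimensional left Leibniz algebra over a field k of characteristic 0, let R be the radical of L and N the nilradical of L. Then [R, R] ⊆ N; in particular the ideal [R,R] is nilpotent. -/

import Mathlib

/-
Basic notions for (left) Leibniz algebras, given by a bilinear bracket
`β : M →ₗ[k] M →ₗ[k] M` on a `k`-vector space `M`.
-/

section LeibnizDefs

variable {k : Type*} [Field k] {M : Type*} [AddCommGroup M] [Module k M]

/-- `[A, B]`: the linear span of brackets of elements of two subspaces. -/
def bracketSpan (β : M →ₗ[k] M →ₗ[k] M) (A B : Submodule k M) : Submodule k M :=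
  Submodule.span k {z : M | ∃ a ∈ A, ∃ b ∈ B, z = β a b}

/-- Derived series of a subspace `I`: `D^0 = I`, `D^{n+1} = [D^n, D^n]`. -/
def derivedSeriesOf (β : M →ₗ[k] M →ₗ[k] M) (I : Submodule k M) : ℕ → Submodule k M
  | 0 => I
  | n + 1 => bracketSpan β (derivedSeriesOf β I n) (derivedSeriesOf β I n)

/-- Lower central series of a subspace `I`: `C^0 = I`, `C^{n+1} = [I, C^n]`. -/
def lowerCentralSeriesOf (β : M →ₗ[k] M →ₗ[k] M) (I : Submodule k M) : ℕ → Submodule k M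
  | 0 => I
  | n + 1 => bracketSpan β I (lowerCentralSeriesOf β I n)

/-- A two-sided ideal. -/
def LeibnizIdeal (β : M →ₗ[k] M →ₗ[k] M) (I : Submodule k M) : Prop :=
  (∀ x : M, ∀ u ∈ I, β x u ∈ I) ∧ (∀ u ∈ I, ∀ x : M, β u x ∈ I)

/-- A subspace is solvable if its derived series reaches `0`. -/
def LeibnizSolvable (β : M →ₗ[k] M →ₗ[k] M) (I : Submodule k M) : Prop :=
  ∃ n, derivedSeriesOf β I n = ⊥

/-- A subspace is nilpotent if its lower central series reaches `0`. -/
def LeibnizNilpotent (β : M →ₗ[k] M →ₗ[k] M) (I : Submodule k M) : Prop :=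
  ∃ n, lowerCentralSeriesOf β I n = ⊥

/-- A subalgebra: a subspace closed under the bracket. -/
def LeibnizSubalgebra (β : M →ₗ[k] M →ₗ[k] M) (S : Submodule k M) : Prop :=
  ∀ u ∈ S, ∀ v ∈ S, β u v ∈ S

end LeibnizDefs
section Generic

open Submodule

variable {k : Type*} [Field k] {M : Type*} [AddCommGroup M] [Module k M]
variable {M' : Type*} [AddCommGroup M'] [Module k M']

lemma mem_bracketSpan_of (β : M →ₗ[k] M →ₗ[k] M) {A B : Submodule k M} {a b : M}
    (ha : a ∈ A) (hb : b ∈ B) : β a b ∈ bracketSpan β A B :=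
  Submodule.subset_span ⟨a, ha, b, hb, rfl⟩

lemma bracketSpan_le (β : M →ₗ[k] M →ₗ[k] M) {A B C : Submodule k M}
    (h : ∀ a ∈ A, ∀ b ∈ B, β a b ∈ C) : bracketSpan β A B ≤ C := by
  apply Submodule.span_le.2
  rintro z ⟨a, ha, b, hb, rfl⟩
  exact h a ha b hb

lemma bracketSpan_mono (β : M →ₗ[k] M →ₗ[k] M) {A B A' B' : Submodule k M}
    (hA : A ≤ A') (hB : B ≤ B') : bracketSpan β A B ≤ bracketSpan β A' B' := by
  apply Submodule.span_mono
  rintro z ⟨a, ha, b, hb, rfl⟩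
  exact ⟨a, hA ha, b, hB hb, rfl⟩

/-- bracket span of spans is contained in span of pointwise brackets. -/
lemma bracketSpan_span_le (β : M →ₗ[k] M →ₗ[k] M) (s t : Set M) :
    bracketSpan β (span k s) (span k t) ≤ span k (Set.image2 (fun a b => β a b) s t) := by
  apply bracketSpan_le
  intro a ha b hb
  induction ha using Submodule.span_induction generalizing b with
  | mem x hx =>
    induction hb using Submodule.span_induction with
    | mem y hy => exact subset_span (Set.mem_image2_of_mem hx hy)
    | zero => simp
    | add y z _ _ hy hz => rw [map_add]; exact add_mem hy hz
    | smul c y _ hy => rw [map_smul]; exact smul_mem _ _ hy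
  | zero => simp
  | add x y _ _ hx hy => rw [map_add, LinearMap.add_apply]; exact add_mem (hx _ hb) (hy _ hb)
  | smul c x _ hx => rw [map_smul, LinearMap.smul_apply]; exact smul_mem _ _ (hx _ hb)

lemma derivedSeriesOf_le_self (β : M →ₗ[k] M →ₗ[k] M) {g : Submodule k M}
    (hg : ∀ a ∈ g, ∀ b ∈ g, β a b ∈ g) : ∀ n, derivedSeriesOf β g n ≤ g := by
  intro n
  induction n with
  | zero => exact le_rfl
  | succ n ih =>
    exact bracketSpan_le β (fun a ha b hb => hg a (ih ha) b (ih hb))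

lemma derivedSeriesOf_mono (β : M →ₗ[k] M →ₗ[k] M) {A B : Submodule k M} (h : A ≤ B) :
    ∀ n, derivedSeriesOf β A n ≤ derivedSeriesOf β B n := by
  intro n
  induction n with
  | zero => exact h
  | succ n ih => exact bracketSpan_mono β ih ih

lemma map_bracketSpan_le (β : M →ₗ[k] M →ₗ[k] M) (β' : M' →ₗ[k] M' →ₗ[k] M')
    (f : M →ₗ[k] M') {A B : Submodule k M}
    (hc : ∀ a ∈ A, ∀ b ∈ B, f (β a b) = β' (f a) (f b)) :
    Submodule.map f (bracketSpan β A B) ≤ bracketSpan β' (Submodule.map f A) (Submodule.map f B) := by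
  rw [bracketSpan, Submodule.map_span]
  apply Submodule.span_le.2
  rintro z ⟨w, ⟨a, ha, b, hb, rfl⟩, rfl⟩
  rw [hc a ha b hb]
  exact mem_bracketSpan_of β' ⟨a, ha, rfl⟩ ⟨b, hb, rfl⟩

lemma bracketSpan_map_le (β : M →ₗ[k] M →ₗ[k] M) (β' : M' →ₗ[k] M' →ₗ[k] M')
    (f : M →ₗ[k] M') {A B : Submodule k M}
    (hc : ∀ a ∈ A, ∀ b ∈ B, f (β a b) = β' (f a) (f b)) :
    bracketSpan β' (Submodule.map f A) (Submodule.map f B) ≤ Submodule.map f (bracketSpan β A B) := by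
  apply bracketSpan_le
  rintro _ ⟨a, ha, rfl⟩ _ ⟨b, hb, rfl⟩
  exact ⟨β a b, mem_bracketSpan_of β ha hb, hc a ha b hb⟩

lemma derivedSeriesOf_map_le (β : M →ₗ[k] M →ₗ[k] M) (β' : M' →ₗ[k] M' →ₗ[k] M')
    (f : M →ₗ[k] M') {g : Submodule k M}
    (hg : ∀ a ∈ g, ∀ b ∈ g, β a b ∈ g)
    (hc : ∀ a ∈ g, ∀ b ∈ g, f (β a b) = β' (f a) (f b)) :
    ∀ n, derivedSeriesOf β' (Submodule.map f g) n ≤ Submodule.map f (derivedSeriesOf β g n) := by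
  intro n
  induction n with
  | zero => exact le_rfl
  | succ n ih =>
    calc derivedSeriesOf β' (Submodule.map f g) (n+1)
        = bracketSpan β' (derivedSeriesOf β' (Submodule.map f g) n)
            (derivedSeriesOf β' (Submodule.map f g) n) := rfl
      _ ≤ bracketSpan β' (Submodule.map f (derivedSeriesOf β g n))
            (Submodule.map f (derivedSeriesOf β g n)) := bracketSpan_mono β' ih ih
      _ ≤ Submodule.map f (bracketSpan β (derivedSeriesOf β g n) (derivedSeriesOf β g n)) := by
          apply bracketSpan_map_le
          intro a ha b hb
          exact hc a (derivedSeriesOf_le_self β hg n ha) b (derivedSeriesOf_le_self β hg n hb)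
      _ = Submodule.map f (derivedSeriesOf β g (n+1)) := rfl

end Generic

/-- Composition chain `f (n-1) * ⋯ * f 1 * f 0` in a monoid. -/
def chComp {A : Type*} [Monoid A] (f : ℕ → A) : ℕ → A
  | 0 => 1
  | n + 1 => f n * chComp f n

lemma chComp_congr {A : Type*} [Monoid A] {f g : ℕ → A} : ∀ {n : ℕ},
    (∀ i < n, f i = g i) → chComp f n = chComp g n
  | 0, _ => rfl
  | n + 1, h => by
    rw [chComp, chComp, h n (Nat.lt_succ_self n), chComp_congr (fun i hi => h i (hi.trans (Nat.lt_succ_self n)))]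

/-- The commutator bilinear map on an associative algebra. -/
def commBil (K : Type*) [CommRing K] (E : Type*) [Ring E] [Algebra K E] :
    E →ₗ[K] E →ₗ[K] E :=
  LinearMap.mk₂ K (fun x y => x * y - y * x)
    (fun a a' b => by noncomm_ring)
    (fun c a b => by simp [smul_sub, smul_mul_assoc, mul_smul_comm])
    (fun a b b' => by noncomm_ring)
    (fun c a b => by simp [smul_sub, smul_mul_assoc, mul_smul_comm])

@[simp] lemma commBil_apply {K : Type*} [CommRing K] {E : Type*} [Ring E] [Algebra K E]
    (x y : E) : commBil K E x y = x * y - y * x := rfl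
section LieTheory

open Submodule Module

variable {K : Type*} [Field K] {V : Type*} [AddCommGroup V] [Module K V]

/-- The flag spanned by `v, x v, x² v, …`. -/
def cycFlag (x : Module.End K V) (v : V) : ℕ → Submodule K V
  | 0 => ⊥
  | i + 1 => cycFlag x v i ⊔ K ∙ ((x ^ i) v)

/-- Key invariance lemma (the heart of Lie's theorem, char 0): if `v` is a common
eigenvector for the "ideal part" `p` with weight `χ`, and `x ∈ g`, then `x v` is again
a `χ`-eigenvector for `p`. -/
lemma weight_invariance [CharZero K] [FiniteDimensional K V]
    (p g : Submodule K (Module.End K V)) (hpg : p ≤ g)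
    (hbr : bracketSpan (commBil K (Module.End K V)) g g ≤ p)
    (χ : Module.End K V → K) {x : Module.End K V} (hx : x ∈ g) {v : V}
    (hv : ∀ y ∈ p, y v = χ y • v) :
    ∀ y ∈ p, y (x v) = χ y • (x v) := by
  classical
  by_cases hv0 : v = 0
  · intro y hy; simp [hv0]
  -- the cyclic flag
  set U : ℕ → Submodule K V := cycFlag x v with hU
  have hU0 : U 0 = ⊥ := rfl
  have hUsucc : ∀ i, U (i + 1) = U i ⊔ K ∙ ((x ^ i) v) := fun i => rfl
  have hUmono : Monotone U := monotone_nat_of_le_succ (fun i => by rw [hUsucc]; exact le_sup_left)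
  have hgen : ∀ i, (x ^ i) v ∈ U (i + 1) := by
    intro i; rw [hUsucc]; exact Submodule.mem_sup_right (mem_span_singleton_self _)
  have hpow : ∀ i, x ((x ^ i) v) = (x ^ (i + 1)) v := by
    intro i
    rw [pow_succ' x i]; rfl
  have hxU : ∀ i, ∀ u ∈ U i, x u ∈ U (i + 1) := by
    intro i
    induction i with
    | zero => intro u hu; rw [hU0] at hu; simp [(Submodule.mem_bot K).1 hu]
    | succ i ih =>
      intro u hu
      rw [hUsucc] at hu
      obtain ⟨u1, hu1, w, hw, rfl⟩ := Submodule.mem_sup.1 hu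
      obtain ⟨c, rfl⟩ := Submodule.mem_span_singleton.1 hw
      rw [map_add, map_smul, hpow]
      rw [hUsucc (i+1)]
      exact add_mem (Submodule.mem_sup_left (ih u1 hu1))
        (Submodule.mem_sup_right (Submodule.smul_mem _ c (mem_span_singleton_self _)))
  -- triangularity of p along the flag
  have hz : ∀ y ∈ p, (y * x - x * y) ∈ p :=
    fun y hy => hbr (mem_bracketSpan_of _ (hpg hy) hx)
  have hd : ∀ i, ∀ y ∈ p, ∃ u ∈ U i, y ((x ^ i) v) = χ y • ((x ^ i) v) + u := by
    intro i
    induction i with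
    | zero =>
      intro y hy
      exact ⟨0, zero_mem _, by simpa using hv y hy⟩
    | succ i ih =>
      intro y hy
      obtain ⟨u1, hu1, h1⟩ := ih y hy
      obtain ⟨u2, hu2, h2⟩ := ih _ (hz y hy)
      refine ⟨x u1 + (χ (y * x - x * y) • ((x ^ i) v) + u2), ?_, ?_⟩
      · refine add_mem (hxU i u1 hu1) (add_mem ?_ (hUmono (Nat.le_succ i) hu2))
        exact Submodule.smul_mem _ _ (hgen i)
      · have key : y ((x ^ (i+1)) v) = x (y ((x ^ i) v)) + (y * x - x * y) ((x ^ i) v) := by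
          simp only [LinearMap.sub_apply, Module.End.mul_apply, hpow]
          abel
        rw [key, h1, h2, map_add, map_smul, hpow]
        abel
  have hstep : ∀ y ∈ p, ∀ i, ∀ u ∈ U (i + 1), y u - χ y • u ∈ U i := by
    intro y hy i
    induction i with
    | zero =>
      intro u hu
      rw [hUsucc, hU0, bot_sup_eq] at hu
      obtain ⟨c, rfl⟩ := Submodule.mem_span_singleton.1 hu
      have hx0 : (x ^ 0) v = v := by simp
      have h0 : y (c • (x ^ 0) v) - χ y • (c • (x ^ 0) v) = 0 := by
        rw [hx0, map_smul, hv y hy, smul_comm (χ y) c, sub_self]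
      rw [h0]
      exact zero_mem _
    | succ i ih =>
      intro u hu
      rw [hUsucc] at hu
      obtain ⟨u1, hu1, w, hw, rfl⟩ := Submodule.mem_sup.1 hu
      obtain ⟨c, rfl⟩ := Submodule.mem_span_singleton.1 hw
      obtain ⟨u2, hu2, h2⟩ := hd (i+1) y hy
      have : y (u1 + c • (x ^ (i+1)) v) - χ y • (u1 + c • (x ^ (i+1)) v)
          = (y u1 - χ y • u1) + c • u2 := by
        rw [map_add, map_smul, h2]
        rw [smul_add, smul_comm c (χ y), smul_add]
        abel
      rw [this]
      exact add_mem (hUmono (Nat.le_succ i) (ih u1 hu1)) (Submodule.smul_mem _ _ hu2)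
  have hyU : ∀ y ∈ p, ∀ i, ∀ u ∈ U i, y u ∈ U i := by
    intro y hy i
    cases i with
    | zero => intro u hu; rw [hU0] at hu ⊢; simp [(Submodule.mem_bot K).1 hu]
    | succ i =>
      intro u hu
      have h1 := hstep y hy i u hu
      have : y u = (y u - χ y • u) + χ y • u := by abel
      rw [this]
      exact add_mem (hUmono (Nat.le_succ i) h1) (Submodule.smul_mem _ _ hu)
  -- stabilization of the flag
  have hstab : ∃ m, U m = U (m + 1) := by
    by_contra hcon
    push_neg at hcon
    have hlt : ∀ m, U m < U (m + 1) := fun m => lt_of_le_of_ne (hUmono (Nat.le_succ m)) (hcon m)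
    have hrank : ∀ m, m ≤ finrank K (U m) := by
      intro m
      induction m with
      | zero => exact Nat.zero_le _
      | succ m ih => exact Nat.succ_le_of_lt (lt_of_le_of_lt ih (Submodule.finrank_lt_finrank_of_lt (hlt m)))
    exact absurd (hrank (finrank K V + 1)) (by
      have := Submodule.finrank_le (U (finrank K V + 1))
      omega)
  obtain ⟨m, hm⟩ := hstab
  have hmne : m ≠ 0 := by
    intro h
    subst h
    rw [hU0, hUsucc, hU0, bot_sup_eq, pow_zero] at hm
    exact hv0 (by simpa using ((Submodule.mem_bot K).1 (hm ▸ mem_span_singleton_self ((1:Module.End K V) v))))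
  have hUm : ∀ j, U (m + j) = U m ∧ (x ^ (m + j)) v ∈ U m := by
    intro j
    induction j with
    | zero =>
      refine ⟨rfl, ?_⟩
      have := hgen m
      rwa [← hm] at this
    | succ j ih =>
      obtain ⟨hEq, hMem⟩ := ih
      constructor
      · rw [show m + (j+1) = (m + j) + 1 from rfl, hUsucc, hEq, sup_eq_left]
        exact Submodule.span_le.2 (by simpa using hMem)
      · have : x ((x ^ (m + j)) v) ∈ U (m + j + 1) := hxU _ _ (hEq ▸ hMem)
        rw [hpow] at this
        have h2 : U (m + j + 1) = U m := by
          rw [hUsucc, hEq, sup_eq_left]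
          exact Submodule.span_le.2 (by simpa using hMem)
        exact h2 ▸ this
  have hUtop : ∀ j, U j ≤ U m := by
    intro j
    rcases le_or_gt j m with h | h
    · exact hUmono h
    · have := (hUm (j - m)).1
      rw [Nat.add_sub_cancel' h.le] at this
      exact this.le
  set T := U m with hT
  have hvT : v ∈ T := by
    have hx0 : (x ^ 0) v = v := by simp
    exact hUtop (0 + 1) (hx0 ▸ hgen 0)
  have hxT : ∀ u ∈ T, x u ∈ T := by
    intro u hu
    have h1 := hxU m u hu
    rwa [← hm] at h1
  have hpT : ∀ y ∈ p, ∀ u ∈ T, y u ∈ T := fun y hy => hyU y hy m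
  -- nilpotency of `y - χ y` on the flag
  have hnil : ∀ y ∈ p, ∀ i, ∀ u ∈ U i, ((y - χ y • 1 : Module.End K V) ^ i) u = 0 := by
    intro y hy i
    induction i with
    | zero =>
      intro u hu
      rw [hU0] at hu
      simp [(Submodule.mem_bot K).1 hu]
    | succ i ih =>
      intro u hu
      rw [pow_succ, Module.End.mul_apply]
      have hdu : (y - χ y • 1 : Module.End K V) u = y u - χ y • u := by
        simp [LinearMap.sub_apply]
      rw [hdu]
      exact ih _ (hstep y hy i u hu)
  have hresco : ∀ (f : Module.End K V) (hf : ∀ u ∈ T, f u ∈ T) (j : ℕ) (u : T),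
      (((LinearMap.restrict f hf) ^ j) u : V) = (f ^ j) (u : V) := by
    intro f hf j
    induction j with
    | zero => intro u; simp
    | succ j ih =>
      intro u
      rw [pow_succ', Module.End.mul_apply, pow_succ', Module.End.mul_apply,
        LinearMap.restrict_coe_apply, ih]
  haveI : Nontrivial T := nontrivial_of_ne ⟨v, hvT⟩ 0 (by simp [hv0])
  have hfr : (finrank K T : K) ≠ 0 := Nat.cast_ne_zero.2 finrank_pos.ne'
  -- trace of restriction of any `y ∈ p`
  have htr : ∀ y (hy : y ∈ p),
      LinearMap.trace K T (LinearMap.restrict y (hpT y hy)) = χ y * (finrank K T : K) := by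
    intro y hy
    set yr := LinearMap.restrict y (hpT y hy) with hyr
    have hdT : ∀ u ∈ T, (y - χ y • 1 : Module.End K V) u ∈ T := by
      intro u hu
      have : (y - χ y • 1 : Module.End K V) u = y u - χ y • u := by simp [LinearMap.sub_apply]
      rw [this]
      exact sub_mem (hpT y hy u hu) (Submodule.smul_mem _ _ hu)
    have hdr : yr - χ y • (1 : Module.End K T) = LinearMap.restrict _ hdT := by
      ext u
      simp [hyr, LinearMap.sub_apply, LinearMap.restrict_coe_apply]
    have hyrnil : IsNilpotent (yr - χ y • (1 : Module.End K T)) := by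
      refine ⟨m, ?_⟩
      ext u
      rw [hdr]
      rw [hresco _ hdT m u]
      simpa using hnil y hy m u u.2
    have hsplit : yr = (yr - χ y • (1 : Module.End K T)) + χ y • 1 := by abel
    rw [hsplit, map_add, map_smul,
      (LinearMap.isNilpotent_trace_of_isNilpotent hyrnil).eq_zero, zero_add,
      LinearMap.trace_one]
    simp [mul_comm]
  -- the weight vanishes on commutators
  intro y0 hy0
  set z : Module.End K V := y0 * x - x * y0 with hzdef
  have hzp : z ∈ p := hz y0 hy0
  have hcomp : LinearMap.restrict z (hpT z hzp)
      = LinearMap.restrict y0 (hpT y0 hy0) * LinearMap.restrict x hxT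
        - LinearMap.restrict x hxT * LinearMap.restrict y0 (hpT y0 hy0) := by
    ext u
    simp [hzdef, LinearMap.sub_apply, Module.End.mul_apply, LinearMap.restrict_coe_apply]
  have htrz : LinearMap.trace K T (LinearMap.restrict z (hpT z hzp)) = 0 := by
    rw [hcomp, map_sub, LinearMap.trace_mul_comm, sub_self]
  have hχz : χ z = 0 := by
    have := htr z hzp
    rw [htrz] at this
    rcases mul_eq_zero.1 this.symm with h | h
    · exact h
    · exact absurd h hfr
  have hzv : z v = 0 := by rw [hv z hzp, hχz, zero_smul]
  have hrel : y0 (x v) = x (y0 v) + z v := by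
    simp [hzdef, LinearMap.sub_apply, Module.End.mul_apply]
  rw [hrel, hzv, add_zero, hv y0 hy0, map_smul]

end LieTheory
section LieTheory2

open Submodule Module

variable {K : Type*} [Field K] {V : Type*} [AddCommGroup V] [Module K V]

theorem exists_common_eigenvector [CharZero K] [IsAlgClosed K] [FiniteDimensional K V] :
    ∀ (d : ℕ) (g : Submodule K (Module.End K V)),
      finrank K g ≤ d →
      (∀ a ∈ g, ∀ b ∈ g, a * b - b * a ∈ g) →
      (∃ n, derivedSeriesOf (commBil K (Module.End K V)) g n = ⊥) →
      ∀ v0 : V, v0 ≠ 0 →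
      ∃ v : V, v ≠ 0 ∧ ∀ x ∈ g, ∃ c : K, x v = c • v := by
  intro d
  induction d with
  | zero =>
    intro g hrank hsub hsolv v0 hv0
    have hg : g = ⊥ := Submodule.finrank_eq_zero.1 (Nat.le_zero.1 hrank)
    refine ⟨v0, hv0, ?_⟩
    intro x hx
    rw [hg] at hx
    exact ⟨0, by simp [(Submodule.mem_bot K).1 hx]⟩
  | succ d ih =>
    intro g hrank hsub hsolv v0 hv0
    by_cases hgbot : g = ⊥
    · refine ⟨v0, hv0, ?_⟩
      intro x hx
      rw [hgbot] at hx
      exact ⟨0, by simp [(Submodule.mem_bot K).1 hx]⟩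
    set cb := commBil K (Module.End K V) with hcb
    set gder := bracketSpan cb g g with hgder
    have hder_le : gder ≤ g := bracketSpan_le cb (fun a ha b hb => hsub a ha b hb)
    have hne : gder ≠ g := by
      intro h
      have hall : ∀ n, derivedSeriesOf cb g n = g := by
        intro n
        induction n with
        | zero => rfl
        | succ n ihn =>
          show bracketSpan cb (derivedSeriesOf cb g n) (derivedSeriesOf cb g n) = g
          rw [ihn, ← hgder, h]
      obtain ⟨n, hn⟩ := hsolv
      exact hgbot ((hall n) ▸ hn)
    obtain ⟨x0, hx0g, hx0d⟩ := SetLike.exists_of_lt (lt_of_le_of_ne hder_le hne)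
    obtain ⟨f, hfx0, hfd⟩ := Submodule.exists_dual_map_eq_bot_of_notMem (p := gder) hx0d inferInstance
    have hfker : ∀ y ∈ gder, f y = 0 := by
      intro y hy
      have : f y ∈ Submodule.map f gder := ⟨y, hy, rfl⟩
      rw [hfd] at this
      exact (Submodule.mem_bot K).1 this
    set p := g ⊓ LinearMap.ker f with hp
    have hpg : p ≤ g := inf_le_left
    have hx0p : x0 ∉ p := fun h => hfx0 (LinearMap.mem_ker.1 h.2)
    have hplt : p < g := lt_of_le_of_ne hpg (fun h => hx0p (h ▸ hx0g))
    have hprank : finrank K p ≤ d := by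
      have := Submodule.finrank_lt_finrank_of_lt hplt
      omega
    have hderp : gder ≤ p :=
      le_inf hder_le (fun y hy => LinearMap.mem_ker.2 (hfker y hy))
    have hpsub : ∀ a ∈ p, ∀ b ∈ p, a * b - b * a ∈ p := by
      intro a ha b hb
      exact hderp (mem_bracketSpan_of cb (hpg ha) (hpg hb))
    have hpsolv : ∃ n, derivedSeriesOf cb p n = ⊥ := by
      obtain ⟨n, hn⟩ := hsolv
      exact ⟨n, le_bot_iff.1 (hn ▸ derivedSeriesOf_mono cb hpg n)⟩
    obtain ⟨w, hw0, hwe⟩ := ih p hprank hpsub hpsolv v0 hv0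
    classical
    set χ : Module.End K V → K := fun y => if h : ∃ c : K, y w = c • w then h.choose else 0 with hχdef
    have hχ : ∀ y ∈ p, y w = χ y • w := by
      intro y hy
      have h := hwe y hy
      simp only [hχdef, dif_pos h]
      exact h.choose_spec
    set W : Submodule K V :=
      { carrier := {v | ∀ y ∈ p, y v = χ y • v}
        add_mem' := by
          intro a b ha hb y hy
          rw [map_add, ha y hy, hb y hy, smul_add]
        zero_mem' := by intro y hy; simp
        smul_mem' := by
          intro c a ha y hy
          rw [map_smul, ha y hy, smul_comm] } with hW
    have hwW : w ∈ W := fun y hy => hχ y hy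
    have hWinv : ∀ x ∈ g, ∀ v ∈ W, x v ∈ W := by
      intro x hxg v hvW
      exact weight_invariance p g hpg hderp χ hxg hvW
    have hx0W : ∀ u ∈ W, x0 u ∈ W := hWinv x0 hx0g
    haveI : Nontrivial W := nontrivial_of_ne ⟨w, hwW⟩ 0 (by simp [hw0])
    set e := LinearMap.restrict x0 hx0W with he
    obtain ⟨c, hc⟩ := Module.End.exists_eigenvalue e
    obtain ⟨u, hu⟩ := hc.exists_hasEigenvector
    refine ⟨(u : V), by simpa using hu.2, ?_⟩
    intro x hxg
    have hyp : x - (f x / f x0) • x0 ∈ p := by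
      refine ⟨sub_mem hxg (Submodule.smul_mem _ _ hx0g), LinearMap.mem_ker.2 ?_⟩
      rw [map_sub, map_smul]
      field_simp
      rw [smul_eq_mul, div_mul_cancel₀ _ hfx0, sub_self]
    have huW : (u : V) ∈ W := u.2
    have h1 : (x - (f x / f x0) • x0) (u : V) = χ (x - (f x / f x0) • x0) • (u : V) :=
      huW _ hyp
    have h2 : x0 (u : V) = c • (u : V) := by
      have := hu.apply_eq_smul
      calc x0 (u : V) = ((e u : W) : V) := (LinearMap.restrict_coe_apply _ _ _).symm
        _ = ((c • u : W) : V) := by rw [this]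
        _ = c • (u : V) := rfl
    refine ⟨χ (x - (f x / f x0) • x0) + (f x / f x0) * c, ?_⟩
    have h3 : x (u : V) = (x - (f x / f x0) • x0) (u : V) + (f x / f x0) • (x0 (u : V)) := by
      simp [LinearMap.sub_apply]
    rw [h3, h1, h2, add_smul, smul_smul]

end LieTheory2
section LieTheory3

open Submodule Module

universe uV

variable {K : Type*} [Field K]

theorem chains_vanish [CharZero K] [IsAlgClosed K] :
    ∀ (d : ℕ) (V : Type uV) [AddCommGroup V] [Module K V] [FiniteDimensional K V]
      (g : Submodule K (Module.End K V)), finrank K V ≤ d →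
      (∀ a ∈ g, ∀ b ∈ g, a * b - b * a ∈ g) →
      (∃ n, derivedSeriesOf (commBil K (Module.End K V)) g n = ⊥) →
      ∃ n : ℕ, ∀ fs : ℕ → Module.End K V,
        (∀ i, fs i ∈ bracketSpan (commBil K (Module.End K V)) g g) → chComp fs n = 0 := by
  intro d
  induction d with
  | zero =>
    intro V _ _ _ g hrank hsub hsolv
    haveI : Subsingleton V := Module.finrank_zero_iff.1 (Nat.le_zero.1 hrank)
    exact ⟨0, fun fs _ => Subsingleton.elim _ _⟩
  | succ d ihd =>
    intro V _ _ _ g hrank hsub hsolv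
    by_cases hV : Subsingleton V
    · exact ⟨0, fun fs _ => Subsingleton.elim _ _⟩
    haveI : Nontrivial V := not_subsingleton_iff_nontrivial.1 hV
    obtain ⟨v0, hv0⟩ := exists_ne (0 : V)
    obtain ⟨v, hvne, hev⟩ :=
      exists_common_eigenvector (finrank K g) g le_rfl hsub hsolv v0 hv0
    set cb := commBil K (Module.End K V) with hcb
    set S' := bracketSpan cb g g with hS'
    have hS'g : S' ≤ g := bracketSpan_le cb (fun a ha b hb => hsub a ha b hb)
    set W : Submodule K V := K ∙ v with hWdef
    have hWstab : ∀ x ∈ g, ∀ u ∈ W, x u ∈ W := by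
      intro x hx u hu
      obtain ⟨a, rfl⟩ := mem_span_singleton.1 hu
      obtain ⟨c, hc⟩ := hev x hx
      rw [map_smul, hc]
      exact Submodule.smul_mem _ _ (Submodule.smul_mem _ _ (mem_span_singleton_self v))
    have hkill : ∀ x ∈ S', x v = 0 := by
      have : S' ≤ LinearMap.ker ((LinearMap.flip (LinearMap.id : Module.End K V →ₗ[K] Module.End K V)) v) := by
        apply bracketSpan_le
        intro a ha b hb
        obtain ⟨ca, hca⟩ := hev a ha
        obtain ⟨cc, hcc⟩ := hev b hb
        rw [LinearMap.mem_ker]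
        have : cb a b v = a (b v) - b (a v) := rfl
        simp only [LinearMap.flip_apply, LinearMap.id_apply]
        show cb a b v = 0
        rw [this, hca, hcc, map_smul, map_smul, hca, hcc, smul_smul, smul_smul, mul_comm, sub_self]
      intro x hx
      have h2 := this hx
      rw [LinearMap.mem_ker] at h2
      simpa using h2
    -- quotient setup
    obtain ⟨σ, hσ⟩ := (W.mkQ).exists_rightInverse_of_surjective
      (LinearMap.range_eq_top.2 (Submodule.mkQ_surjective W))
    set F : Module.End K V →ₗ[K] Module.End K (V ⧸ W) :=
      { toFun := fun x => W.mkQ ∘ₗ x ∘ₗ σ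
        map_add' := fun x y => by
          ext u; simp [LinearMap.add_comp, LinearMap.comp_add]
        map_smul' := fun c x => by
          ext u; simp [LinearMap.smul_comp, LinearMap.comp_smul] } with hF
    have hσap : ∀ q : V ⧸ W, W.mkQ (σ q) = q := fun q => by
      have := LinearMap.congr_fun hσ q
      simpa using this
    have hFcomm : ∀ x : Module.End K V, (∀ u ∈ W, x u ∈ W) →
        ∀ u : V, F x (W.mkQ u) = W.mkQ (x u) := by
      intro x hstab u
      show W.mkQ (x (σ (W.mkQ u))) = W.mkQ (x u)
      rw [← sub_eq_zero, ← map_sub, ← map_sub, Submodule.mkQ_apply, Submodule.Quotient.mk_eq_zero]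
      apply hstab
      rw [← Submodule.Quotient.mk_eq_zero W, ← Submodule.mkQ_apply, map_sub, hσap]
      simp
    have hFmul : ∀ x y : Module.End K V, (∀ u ∈ W, x u ∈ W) → (∀ u ∈ W, y u ∈ W) →
        F (x * y) = F x * F y := by
      intro x y hx hy
      apply LinearMap.ext
      intro q
      obtain ⟨u, rfl⟩ := Submodule.mkQ_surjective W q
      rw [Module.End.mul_apply, hFcomm y hy, hFcomm x hx, hFcomm (x * y) (fun u hu => hx _ (hy _ hu))]
      rfl
    set cb' := commBil K (Module.End K (V ⧸ W)) with hcb'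
    have hcompat : ∀ a ∈ g, ∀ b ∈ g, F (cb a b) = cb' (F a) (F b) := by
      intro a ha b hb
      show F (a * b - b * a) = F a * F b - F b * F a
      rw [map_sub, hFmul a b (hWstab a ha) (hWstab b hb), hFmul b a (hWstab b hb) (hWstab a ha)]
    set g1 := Submodule.map F g with hg1
    have hg1sub : ∀ a' ∈ g1, ∀ b' ∈ g1, a' * b' - b' * a' ∈ g1 := by
      rintro _ ⟨a, ha, rfl⟩ _ ⟨b, hb, rfl⟩
      refine ⟨a * b - b * a, hsub a ha b hb, ?_⟩
      show F (a * b - b * a) = F a * F b - F b * F a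
      rw [map_sub, hFmul a b (hWstab a ha) (hWstab b hb), hFmul b a (hWstab b hb) (hWstab a ha)]
    have hg1solv : ∃ n, derivedSeriesOf cb' g1 n = ⊥ := by
      obtain ⟨n, hn⟩ := hsolv
      refine ⟨n, le_bot_iff.1 ?_⟩
      have := derivedSeriesOf_map_le cb cb' F hsub hcompat n
      rw [hn, Submodule.map_bot] at this
      exact this
    have hqrank : finrank K (V ⧸ W) ≤ d := by
      haveI : Nontrivial W := nontrivial_of_ne ⟨v, mem_span_singleton_self v⟩ 0 (by simp [hvne])
      have h1 := Submodule.finrank_quotient_add_finrank W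
      have h2 : 0 < finrank K W := finrank_pos
      omega
    obtain ⟨n, hn⟩ := ihd (V ⧸ W) g1 hqrank hg1sub hg1solv
    refine ⟨n + 1, ?_⟩
    intro fs hfs
    have hfs_g : ∀ i, fs i ∈ g := fun i => hS'g (hfs i)
    have hfs_stab : ∀ i, ∀ u ∈ W, fs i u ∈ W := fun i => hWstab _ (hfs_g i)
    have hFfs : ∀ i, F (fs i) ∈ bracketSpan cb' g1 g1 :=
      fun i => map_bracketSpan_le cb cb' F hcompat ⟨fs i, hfs i, rfl⟩
    have hchain : ∀ m (u : V),
        W.mkQ ((chComp fs m) u) = (chComp (fun i => F (fs i)) m) (W.mkQ u) := by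
      intro m
      induction m with
      | zero => intro u; rfl
      | succ m ihm =>
        intro u
        show W.mkQ ((fs m) ((chComp fs m) u)) = (F (fs m)) ((chComp (fun i => F (fs i)) m) (W.mkQ u))
        rw [← ihm u, hFcomm (fs m) (hfs_stab m)]
    apply LinearMap.ext
    intro u
    have h1 : W.mkQ ((chComp fs n) u) = 0 := by
      rw [hchain n u, hn (fun i => F (fs i)) hFfs]
      rfl
    have h2 : (chComp fs n) u ∈ W := by
      rwa [Submodule.mkQ_apply, Submodule.Quotient.mk_eq_zero] at h1
    obtain ⟨a, ha⟩ := mem_span_singleton.1 h2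
    show (fs n) ((chComp fs n) u) = 0
    rw [← ha, map_smul, hkill (fs n) (hfs n), smul_zero]

end LieTheory3

open TensorProduct in
set_option synthInstance.maxHeartbeats 1000000 in
set_option maxHeartbeats 1600000 in
/-- `[R,R] ⊆ N`; in particular the ideal `[R,R]` is nilpotent. -/
theorem stmt_14 {k : Type*} [Field k] [CharZero k] {L : Type*} [AddCommGroup L] [Module k L]
    [FiniteDimensional k L] (β : L →ₗ[k] L →ₗ[k] L)
    (leib : ∀ x y z : L, β x (β y z) = β (β x y) z + β y (β x z))
    (R : Submodule k L) (hRid : LeibnizIdeal β R) (hRsolv : LeibnizSolvable β R)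
    (hRmax : ∀ I : Submodule k L, LeibnizIdeal β I → LeibnizSolvable β I → I ≤ R)
    (N : Submodule k L) (hNid : LeibnizIdeal β N) (hNnil : LeibnizNilpotent β N)
    (hNmax : ∀ I : Submodule k L, LeibnizIdeal β I → LeibnizNilpotent β I → I ≤ N) :
    bracketSpan β R R ≤ N ∧ LeibnizNilpotent β (bracketSpan β R R) := by
  classical
  set S := bracketSpan β R R with hSdef
  -- `S` is an ideal of `L`
  have hSR : S ≤ R := bracketSpan_le β (fun a ha b hb => hRid.2 a ha b)
  have hSid : LeibnizIdeal β S := by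
    constructor
    · intro x u hu
      have : S ≤ Submodule.comap (β x) S := by
        apply Submodule.span_le.2
        rintro _ ⟨a, ha, b, hb, rfl⟩
        simp only [SetLike.mem_coe, Submodule.mem_comap]
        rw [leib x a b]
        exact add_mem (mem_bracketSpan_of β (hRid.1 x a ha) hb)
          (mem_bracketSpan_of β ha (hRid.1 x b hb))
      exact this hu
    · intro u hu x
      have : S ≤ Submodule.comap (β.flip x) S := by
        apply Submodule.span_le.2
        rintro _ ⟨a, ha, b, hb, rfl⟩
        simp only [SetLike.mem_coe, Submodule.mem_comap]
        have h1 : β (β a b) x = β a (β b x) - β b (β a x) := by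
          rw [leib a b x]; abel
        show β (β a b) x ∈ S
        rw [h1]
        exact sub_mem (mem_bracketSpan_of β ha (hRid.2 b hb x))
          (mem_bracketSpan_of β hb (hRid.2 a ha x))
      exact this hu
  -- left-multiplication is a homomorphism to the commutator algebra of `End k L`
  set cbk := commBil k (Module.End k L) with hcbk
  have hhom : ∀ a b : L, β (β a b) = cbk (β a) (β b) := by
    intro a b
    apply LinearMap.ext
    intro z
    have := leib a b z
    show β (β a b) z = β a (β b z) - β b (β a z)
    rw [this]; abel
  have hRsub : ∀ a ∈ R, ∀ b ∈ R, β a b ∈ R := fun a ha b _ => hRid.2 a ha b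
  set g0 : Submodule k (Module.End k L) := Submodule.map β R with hg0
  have hg0der : ∀ n, derivedSeriesOf cbk g0 n ≤ Submodule.map β (derivedSeriesOf β R n) :=
    derivedSeriesOf_map_le β cbk β hRsub (fun a ha b hb => hhom a b)
  -- base change to the algebraic closure
  obtain ⟨K, _, _, _, _⟩ : (K : Type _) ×' (_ : Field K) ×' (_ : Algebra k K) ×' (_ : IsAlgClosed K) ×' CharZero K :=
    ⟨AlgebraicClosure k, inferInstance, inferInstance, inferInstance, inferInstance⟩
  set Φ : Module.End k L →ₐ[k] Module.End K (K ⊗[k] L) := Module.End.baseChangeHom k K L with hΦ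
  set cbK := commBil K (Module.End K (K ⊗[k] L)) with hcbK
  have hΦcomm : ∀ a b : Module.End k L, Φ (cbk a b) = cbK (Φ a) (Φ b) := by
    intro a b
    show Φ (a * b - b * a) = Φ a * Φ b - Φ b * Φ a
    rw [map_sub, map_mul, map_mul]
  set G : Submodule K (Module.End K (K ⊗[k] L)) :=
    Submodule.span K (⇑Φ '' (g0 : Set (Module.End k L))) with hG
  have himg : ∀ (A : Submodule k (Module.End k L)) (x : Module.End k L), x ∈ A →
      Φ x ∈ Submodule.span K (⇑Φ '' (A : Set (Module.End k L))) :=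
    fun A x hx => Submodule.subset_span ⟨x, hx, rfl⟩
  have hGtrans : ∀ n : ℕ, derivedSeriesOf (k := K) (M := Module.End K (K ⊗[k] L)) cbK G n ≤
      Submodule.span K (⇑Φ '' (derivedSeriesOf cbk g0 n : Set (Module.End k L))) := by
    intro n
    induction n with
    | zero => exact le_rfl
    | succ n ih =>
      calc derivedSeriesOf (k := K) (M := Module.End K (K ⊗[k] L)) cbK G (n+1)
          ≤ bracketSpan (k := K) (M := Module.End K (K ⊗[k] L)) cbK (Submodule.span K (⇑Φ '' (derivedSeriesOf cbk g0 n : Set _)))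
              (Submodule.span K (⇑Φ '' (derivedSeriesOf cbk g0 n : Set _))) :=
            by have h := bracketSpan_mono (k := K) (M := Module.End K (K ⊗[k] L)) cbK ih ih; exact h
        _ ≤ Submodule.span K (Set.image2 (fun a b => cbK a b)
              (⇑Φ '' (derivedSeriesOf cbk g0 n : Set _))
              (⇑Φ '' (derivedSeriesOf cbk g0 n : Set _))) := by
                have h := bracketSpan_span_le (k := K) (M := Module.End K (K ⊗[k] L)) cbK (⇑Φ '' (derivedSeriesOf cbk g0 n : Set _)) (⇑Φ '' (derivedSeriesOf cbk g0 n : Set _)); exact h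
        _ ≤ Submodule.span K (⇑Φ '' (derivedSeriesOf cbk g0 (n+1) : Set _)) := by
            apply Submodule.span_mono
            rintro _ ⟨_, ⟨a, ha, rfl⟩, _, ⟨b, hb, rfl⟩, rfl⟩
            exact ⟨cbk a b, mem_bracketSpan_of cbk ha hb, hΦcomm a b⟩
  have hGsolv : ∃ n, derivedSeriesOf (k := K) (M := Module.End K (K ⊗[k] L)) cbK G n = ⊥ := by
    obtain ⟨n, hn⟩ := hRsolv
    refine ⟨n, le_bot_iff.1 ?_⟩
    refine le_trans (hGtrans n) ?_
    have h1 : derivedSeriesOf cbk g0 n ≤ ⊥ := by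
      refine le_trans (hg0der n) ?_
      rw [hn, Submodule.map_bot]
    apply Submodule.span_le.2
    rintro _ ⟨x, hx, rfl⟩
    have : x = 0 := (Submodule.mem_bot k).1 (h1 hx)
    simp [this]
  have hg0sub : ∀ a ∈ g0, ∀ b ∈ g0, cbk a b ∈ g0 := by
    rintro _ ⟨a, ha, rfl⟩ _ ⟨b, hb, rfl⟩
    exact ⟨β a b, hRid.2 a ha b, hhom a b⟩
  have hGsub : ∀ a ∈ G, ∀ b ∈ G, a * b - b * a ∈ G := by
    intro a ha b hb
    have h1 : a * b - b * a ∈ bracketSpan (k := K) (M := Module.End K (K ⊗[k] L)) cbK G G := by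
      have h := mem_bracketSpan_of (k := K) (M := Module.End K (K ⊗[k] L)) cbK ha hb; exact h
    have h2 : bracketSpan (k := K) (M := Module.End K (K ⊗[k] L)) cbK G G ≤ G := by
      refine le_trans (hGtrans 1) ?_
      apply Submodule.span_mono
      apply Set.image_mono
      exact derivedSeriesOf_le_self cbk hg0sub 1
    exact h2 h1
  -- joint nilpotency over the algebraic closure
  obtain ⟨n, hn⟩ := chains_vanish (Module.finrank K (K ⊗[k] L)) (K ⊗[k] L) G le_rfl
    hGsub hGsolv
  -- injectivity of base change
  have hj : Function.Injective (fun w : L => (1 : K) ⊗ₜ[k] w) := by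
    have h1 : Function.Injective (LinearMap.rTensor L (Algebra.linearMap k K)) :=
      Module.Flat.rTensor_preserves_injective_linearMap _ (algebraMap k K).injective
    intro w1 w2 h
    have e : ∀ w : L, (1 : K) ⊗ₜ[k] w
        = LinearMap.rTensor L (Algebra.linearMap k K) ((TensorProduct.lid k L).symm w) := by
      intro w
      rw [TensorProduct.lid_symm_apply, LinearMap.rTensor_tmul]
      simp
    have h' : (1 : K) ⊗ₜ[k] w1 = (1 : K) ⊗ₜ[k] w2 := h
    rw [e w1, e w2] at h'
    exact (TensorProduct.lid k L).symm.injective (h1 h')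
  have hΦap : ∀ (x : Module.End k L) (c : K) (w : L), Φ x (c ⊗ₜ[k] w) = c ⊗ₜ[k] (x w) := by
    intro x c w
    rw [hΦ]
    simp [Module.End.baseChangeHom]
    rfl
  have hΦinj : Function.Injective ⇑Φ := by
    intro x y h
    apply LinearMap.ext
    intro w
    apply hj
    show (1 : K) ⊗ₜ[k] x w = (1 : K) ⊗ₜ[k] y w
    rw [← hΦap x 1 w, ← hΦap y 1 w, h]
  -- membership of brackets after base change
  have hmem1 : ∀ s ∈ S, β s ∈ bracketSpan cbk g0 g0 := by
    intro s hs
    exact map_bracketSpan_le β cbk β (fun a ha b hb => hhom a b) ⟨s, hs, rfl⟩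
  have hmem2 : ∀ x ∈ bracketSpan cbk g0 g0, Φ x ∈ bracketSpan (k := K) (M := Module.End K (K ⊗[k] L)) cbK G G := by
    intro x hx
    induction hx using Submodule.span_induction with
    | mem z hz =>
      obtain ⟨a, ha, b, hb, rfl⟩ := hz
      rw [hΦcomm a b]
      have h := mem_bracketSpan_of (k := K) (M := Module.End K (K ⊗[k] L)) cbK (himg g0 a ha) (himg g0 b hb); exact h
    | zero => rw [map_zero]; exact zero_mem _
    | add a b _ _ hA hB => rw [map_add]; exact add_mem hA hB
    | smul c a _ hA =>
      rw [map_smul]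
      have : c • Φ a = (algebraMap k K c) • Φ a := (algebraMap_smul K c (Φ a)).symm
      rw [this]
      exact Submodule.smul_mem _ _ hA
  -- chains of left multiplications by elements of `S` vanish
  have hzero : ∀ s : ℕ → L, (∀ i, s i ∈ S) → chComp (fun i => β (s i)) n = 0 := by
    intro s hs
    apply hΦinj
    have hmapch : ∀ m, Φ (chComp (fun i => β (s i)) m) = chComp (fun i => Φ (β (s i))) m := by
      intro m
      induction m with
      | zero => exact map_one Φ
      | succ m ih =>
        show Φ (β (s m) * chComp (fun i => β (s i)) m)
          = Φ (β (s m)) * chComp (fun i => Φ (β (s i))) m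
        rw [map_mul, ih]
      
    rw [map_zero, hmapch n]
    exact hn _ (fun i => hmem2 _ (hmem1 (s i) (hs i)))
  -- the lower central series of `S` vanishes
  set C : ℕ → Submodule k L := fun m => Submodule.span k
    {w | ∃ s : ℕ → L, (∀ i, s i ∈ S) ∧ ∃ t, t ∈ S ∧ w = (chComp (fun i => β (s i)) m) t}
    with hC
  have hlcs : ∀ m, lowerCentralSeriesOf β S m ≤ C m := by
    intro m
    induction m with
    | zero =>
      intro w hw
      exact Submodule.subset_span ⟨fun _ => 0, fun _ => zero_mem _, w, hw, rfl⟩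
    | succ m ih =>
      show bracketSpan β S (lowerCentralSeriesOf β S m) ≤ C (m+1)
      refine le_trans (bracketSpan_mono β le_rfl ih) ?_
      apply bracketSpan_le
      intro a ha w hw
      have : C m ≤ Submodule.comap (β a) (C (m+1)) := by
        apply Submodule.span_le.2
        rintro _ ⟨s, hsS, t, htS, rfl⟩
        simp only [SetLike.mem_coe, Submodule.mem_comap]
        set s' := Function.update s m a with hs'
        have h1 : chComp (fun i => β (s' i)) (m+1) = β a * chComp (fun i => β (s i)) m := by
          show β (s' m) * chComp (fun i => β (s' i)) m = β a * chComp (fun i => β (s i)) m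
          have h2 : s' m = a := Function.update_self m a s
          have h3 : chComp (fun i => β (s' i)) m = chComp (fun i => β (s i)) m := by
            apply chComp_congr
            intro i hi
            rw [hs', Function.update_of_ne (Nat.ne_of_lt hi)]
          rw [h2, h3]
        apply Submodule.subset_span
        refine ⟨s', ?_, t, htS, ?_⟩
        · intro i
          by_cases hi : i = m
          · rw [hs', hi, Function.update_self]; exact ha
          · rw [hs', Function.update_of_ne hi]; exact hsS i
        · rw [h1]; rfl
      exact this hw
  have hlcsn : lowerCentralSeriesOf β S n = ⊥ := by
    refine le_bot_iff.1 (le_trans (hlcs n) ?_)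
    apply Submodule.span_le.2
    rintro _ ⟨s, hsS, t, htS, rfl⟩
    rw [hzero s hsS]
    simp
  have hnilS : LeibnizNilpotent β S := ⟨n, hlcsn⟩
  exact ⟨hNmax S hSid hnilS, hnilS⟩
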